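/- Let $u, v, w \in \mathbb{R}^7$ be orthonormal with $\varphi_0(u,v,w) = 0$, and set $R = \chi(u,v,w)$. Then the span of $\{u \times v, v \times w, w \times u\}$ is orthogonal to the span of $\{u, v, w, R\}$. -/

import Mathlib

noncomputable section
open scoped RealInnerProductSpace

abbrev R7 : Type := EuclideanSpace ℝ (Fin 7)

/-- standard basis vector -/
def e (k : Fin 7) : R7 := EuclideanSpace.single k 1

/-- `e^{ijk}(u,v,w)` -/
def tri (i j k : Fin 7) (u v w : R7) : ℝ :=
  Matrix.det !![u i, u j, u k; v i, v j, v k; w i, w j, w k]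

/-- the standard `G₂` 3-form `φ₀` (indices shifted to 0-based) -/
def phi0 (u v w : R7) : ℝ :=
  tri 0 1 2 u v w + tri 0 3 4 u v w + tri 0 5 6 u v w + tri 1 3 5 u v w
    - tri 1 4 6 u v w - tri 2 3 6 u v w - tri 2 4 5 u v w

/-- `e^{ijkl}(u,v,w,z)` -/
def quad (i j k l : Fin 7) (u v w z : R7) : ℝ :=
  Matrix.det !![u i, u j, u k, u l; v i, v j, v k, v l;
    w i, w j, w k, w l; z i, z j, z k, z l]

/-- the 4-form `⋆φ₀` -/
def starphi0 (u v w z : R7) : ℝ :=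
  quad 3 4 5 6 u v w z + quad 1 2 5 6 u v w z + quad 1 2 3 4 u v w z
    + quad 0 2 4 6 u v w z - quad 0 2 3 5 u v w z - quad 0 1 4 5 u v w z
    - quad 0 1 3 6 u v w z

/-- the cross product: `⟪u × v, w⟫ = φ₀(u,v,w)` -/
def cross (u v : R7) : R7 :=
  (WithLp.equiv 2 (Fin 7 → ℝ)).symm fun k => phi0 u v (e k)

/-- the associator `χ`: `⟪χ(u,v,w), z⟫ = ⋆φ₀(u,v,w,z)` -/
def chi (u v w : R7) : R7 :=
  (WithLp.equiv 2 (Fin 7 → ℝ)).symm fun k => starphi0 u v w (e k)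

/-- the coassociator `σ` -/
def sigma (a b c d : R7) : R7 :=
  ⟪b, cross c d⟫ • a + ⟪c, cross a d⟫ • b + ⟪a, cross b d⟫ • c + ⟪b, cross a c⟫ • d

/-- Gram determinant `|u ∧ v ∧ w|²` -/
def gram3 (u v w : R7) : ℝ :=
  Matrix.det !![⟪u,u⟫, ⟪u,v⟫, ⟪u,w⟫; ⟪v,u⟫, ⟪v,v⟫, ⟪v,w⟫; ⟪w,u⟫, ⟪w,v⟫, ⟪w,w⟫]

/-- Gram determinant `|u ∧ v ∧ w ∧ z|²` -/
def gram4 (u v w z : R7) : ℝ :=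
  Matrix.det !![⟪u,u⟫, ⟪u,v⟫, ⟪u,w⟫, ⟪u,z⟫;
    ⟪v,u⟫, ⟪v,v⟫, ⟪v,w⟫, ⟪v,z⟫;
    ⟪w,u⟫, ⟪w,v⟫, ⟪w,w⟫, ⟪w,z⟫;
    ⟪z,u⟫, ⟪z,v⟫, ⟪z,w⟫, ⟪z,z⟫]


set_option maxHeartbeats 1000000 in
lemma det_fin_four (A : Matrix (Fin 4) (Fin 4) ℝ) :
    A.det =
      A 0 0 * (A 1 1 * A 2 2 * A 3 3 - A 1 1 * A 2 3 * A 3 2 - A 1 2 * A 2 1 * A 3 3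
        + A 1 2 * A 2 3 * A 3 1 + A 1 3 * A 2 1 * A 3 2 - A 1 3 * A 2 2 * A 3 1)
      - A 0 1 * (A 1 0 * A 2 2 * A 3 3 - A 1 0 * A 2 3 * A 3 2 - A 1 2 * A 2 0 * A 3 3
        + A 1 2 * A 2 3 * A 3 0 + A 1 3 * A 2 0 * A 3 2 - A 1 3 * A 2 2 * A 3 0)
      + A 0 2 * (A 1 0 * A 2 1 * A 3 3 - A 1 0 * A 2 3 * A 3 1 - A 1 1 * A 2 0 * A 3 3
        + A 1 1 * A 2 3 * A 3 0 + A 1 3 * A 2 0 * A 3 1 - A 1 3 * A 2 1 * A 3 0)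
      - A 0 3 * (A 1 0 * A 2 1 * A 3 2 - A 1 0 * A 2 2 * A 3 1 - A 1 1 * A 2 0 * A 3 2
        + A 1 1 * A 2 2 * A 3 0 + A 1 2 * A 2 0 * A 3 1 - A 1 2 * A 2 1 * A 3 0) := by
  rw [Matrix.det_succ_row_zero]
  simp [Fin.sum_univ_succ, Matrix.det_fin_three, Fin.succAbove]
  ring

lemma crossA0 (a b : R7) : cross a b 0 = a 1*b 2 - a 2*b 1 + a 3*b 4 - a 4*b 3 + a 5*b 6 - a 6*b 5 := by
  show phi0 a b (e 0) = _
  simp [phi0, tri, e, EuclideanSpace.single_apply, Matrix.det_fin_three]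
  ring

lemma crossA1 (a b : R7) : cross a b 1 = -a 0*b 2 + a 2*b 0 + a 3*b 5 - a 4*b 6 - a 5*b 3 + a 6*b 4 := by
  show phi0 a b (e 1) = _
  simp [phi0, tri, e, EuclideanSpace.single_apply, Matrix.det_fin_three]
  ring

lemma crossA2 (a b : R7) : cross a b 2 = a 0*b 1 - a 1*b 0 - a 3*b 6 - a 4*b 5 + a 5*b 4 + a 6*b 3 := by
  show phi0 a b (e 2) = _
  simp [phi0, tri, e, EuclideanSpace.single_apply, Matrix.det_fin_three]
  ring

lemma crossA3 (a b : R7) : cross a b 3 = -a 0*b 4 - a 1*b 5 + a 2*b 6 + a 4*b 0 + a 5*b 1 - a 6*b 2 := by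
  show phi0 a b (e 3) = _
  simp [phi0, tri, e, EuclideanSpace.single_apply, Matrix.det_fin_three]
  ring

lemma crossA4 (a b : R7) : cross a b 4 = a 0*b 3 + a 1*b 6 + a 2*b 5 - a 3*b 0 - a 5*b 2 - a 6*b 1 := by
  show phi0 a b (e 4) = _
  simp [phi0, tri, e, EuclideanSpace.single_apply, Matrix.det_fin_three]
  ring

lemma crossA5 (a b : R7) : cross a b 5 = -a 0*b 6 + a 1*b 3 - a 2*b 4 - a 3*b 1 + a 4*b 2 + a 6*b 0 := by
  show phi0 a b (e 5) = _
  simp [phi0, tri, e, EuclideanSpace.single_apply, Matrix.det_fin_three]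
  ring

lemma crossA6 (a b : R7) : cross a b 6 = a 0*b 5 - a 1*b 4 - a 2*b 3 + a 3*b 2 + a 4*b 1 - a 5*b 0 := by
  show phi0 a b (e 6) = _
  simp [phi0, tri, e, EuclideanSpace.single_apply, Matrix.det_fin_three]
  ring

set_option maxHeartbeats 2000000 in
theorem stmt10 (u v w : R7) (hu : ‖u‖ = 1) (hv : ‖v‖ = 1) (hw : ‖w‖ = 1)
    (huv : ⟪u, v⟫ = 0) (hvw : ⟪v, w⟫ = 0) (huw : ⟪u, w⟫ = 0)
    (hphi : phi0 u v w = 0) :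
    ∀ (i : Fin 3) (j : Fin 4),
      ⟪(![cross u v, cross v w, cross w u]) i, (![u, v, w, chi u v w]) j⟫ = 0 := by
  have hp : u 0*v 1*w 2 - u 0*v 2*w 1 + u 0*v 3*w 4 - u 0*v 4*w 3 + u 0*v 5*w 6 - u 0*v 6*w 5 - u 1*v 0*w 2 + u 1*v 2*w 0 + u 1*v 3*w 5 - u 1*v 4*w 6 - u 1*v 5*w 3 + u 1*v 6*w 4 + u 2*v 0*w 1 - u 2*v 1*w 0 - u 2*v 3*w 6 - u 2*v 4*w 5 + u 2*v 5*w 4 + u 2*v 6*w 3 - u 3*v 0*w 4 - u 3*v 1*w 5 + u 3*v 2*w 6 + u 3*v 4*w 0 + u 3*v 5*w 1 - u 3*v 6*w 2 + u 4*v 0*w 3 + u 4*v 1*w 6 + u 4*v 2*w 5 - u 4*v 3*w 0 - u 4*v 5*w 2 - u 4*v 6*w 1 - u 5*v 0*w 6 + u 5*v 1*w 3 - u 5*v 2*w 4 - u 5*v 3*w 1 + u 5*v 4*w 2 + u 5*v 6*w 0 + u 6*v 0*w 5 - u 6*v 1*w 4 - u 6*v 2*w 3 + u 6*v 3*w 2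 + u 6*v 4*w 1 - u 6*v 5*w 0 = 0 := by
    have h := hphi
    simp [phi0, tri, Matrix.det_fin_three] at h
    linear_combination h
  have hx0 : chi u v w 0 = u 1*v 3*w 6 + u 1*v 4*w 5 - u 1*v 5*w 4 - u 1*v 6*w 3 + u 2*v 3*w 5 - u 2*v 4*w 6 - u 2*v 5*w 3 + u 2*v 6*w 4 - u 3*v 1*w 6 - u 3*v 2*w 5 + u 3*v 5*w 2 + u 3*v 6*w 1 - u 4*v 1*w 5 + u 4*v 2*w 6 + u 4*v 5*w 1 - u 4*v 6*w 2 + u 5*v 1*w 4 + u 5*v 2*w 3 - u 5*v 3*w 2 - u 5*v 4*w 1 + u 6*v 1*w 3 - u 6*v 2*w 4 - u 6*v 3*w 1 + u 6*v 4*w 2 := by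
    show starphi0 u v w (e 0) = _
    simp [starphi0, quad, e, EuclideanSpace.single_apply, det_fin_four]
    ring
  have hx1 : chi u v w 1 = -u 0*v 3*w 6 - u 0*v 4*w 5 + u 0*v 5*w 4 + u 0*v 6*w 3 - u 2*v 3*w 4 + u 2*v 4*w 3 - u 2*v 5*w 6 + u 2*v 6*w 5 + u 3*v 0*w 6 + u 3*v 2*w 4 - u 3*v 4*w 2 - u 3*v 6*w 0 + u 4*v 0*w 5 - u 4*v 2*w 3 + u 4*v 3*w 2 - u 4*v 5*w 0 - u 5*v 0*w 4 + u 5*v 2*w 6 + u 5*v 4*w 0 - u 5*v 6*w 2 - u 6*v 0*w 3 - u 6*v 2*w 5 + u 6*v 3*w 0 + u 6*v 5*w 2 := by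
    show starphi0 u v w (e 1) = _
    simp [starphi0, quad, e, EuclideanSpace.single_apply, det_fin_four]
    ring
  have hx2 : chi u v w 2 = -u 0*v 3*w 5 + u 0*v 4*w 6 + u 0*v 5*w 3 - u 0*v 6*w 4 + u 1*v 3*w 4 - u 1*v 4*w 3 + u 1*v 5*w 6 - u 1*v 6*w 5 + u 3*v 0*w 5 - u 3*v 1*w 4 + u 3*v 4*w 1 - u 3*v 5*w 0 - u 4*v 0*w 6 + u 4*v 1*w 3 - u 4*v 3*w 1 + u 4*v 6*w 0 - u 5*v 0*w 3 - u 5*v 1*w 6 + u 5*v 3*w 0 + u 5*v 6*w 1 + u 6*v 0*w 4 + u 6*v 1*w 5 - u 6*v 4*w 0 - u 6*v 5*w 1 := by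
    show starphi0 u v w (e 2) = _
    simp [starphi0, quad, e, EuclideanSpace.single_apply, det_fin_four]
    ring
  have hx3 : chi u v w 3 = u 0*v 1*w 6 + u 0*v 2*w 5 - u 0*v 5*w 2 - u 0*v 6*w 1 - u 1*v 0*w 6 - u 1*v 2*w 4 + u 1*v 4*w 2 + u 1*v 6*w 0 - u 2*v 0*w 5 + u 2*v 1*w 4 - u 2*v 4*w 1 + u 2*v 5*w 0 - u 4*v 1*w 2 + u 4*v 2*w 1 - u 4*v 5*w 6 + u 4*v 6*w 5 + u 5*v 0*w 2 - u 5*v 2*w 0 + u 5*v 4*w 6 - u 5*v 6*w 4 + u 6*v 0*w 1 - u 6*v 1*w 0 - u 6*v 4*w 5 + u 6*v 5*w 4 := by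
    show starphi0 u v w (e 3) = _
    simp [starphi0, quad, e, EuclideanSpace.single_apply, det_fin_four]
    ring
  have hx4 : chi u v w 4 = u 0*v 1*w 5 - u 0*v 2*w 6 - u 0*v 5*w 1 + u 0*v 6*w 2 - u 1*v 0*w 5 + u 1*v 2*w 3 - u 1*v 3*w 2 + u 1*v 5*w 0 + u 2*v 0*w 6 - u 2*v 1*w 3 + u 2*v 3*w 1 - u 2*v 6*w 0 + u 3*v 1*w 2 - u 3*v 2*w 1 + u 3*v 5*w 6 - u 3*v 6*w 5 + u 5*v 0*w 1 - u 5*v 1*w 0 - u 5*v 3*w 6 + u 5*v 6*w 3 - u 6*v 0*w 2 + u 6*v 2*w 0 + u 6*v 3*w 5 - u 6*v 5*w 3 := by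
    show starphi0 u v w (e 4) = _
    simp [starphi0, quad, e, EuclideanSpace.single_apply, det_fin_four]
    ring
  have hx5 : chi u v w 5 = -u 0*v 1*w 4 - u 0*v 2*w 3 + u 0*v 3*w 2 + u 0*v 4*w 1 + u 1*v 0*w 4 - u 1*v 2*w 6 - u 1*v 4*w 0 + u 1*v 6*w 2 + u 2*v 0*w 3 + u 2*v 1*w 6 - u 2*v 3*w 0 - u 2*v 6*w 1 - u 3*v 0*w 2 + u 3*v 2*w 0 - u 3*v 4*w 6 + u 3*v 6*w 4 - u 4*v 0*w 1 + u 4*v 1*w 0 + u 4*v 3*w 6 - u 4*v 6*w 3 - u 6*v 1*w 2 + u 6*v 2*w 1 - u 6*v 3*w 4 + u 6*v 4*w 3 := by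
    show starphi0 u v w (e 5) = _
    simp [starphi0, quad, e, EuclideanSpace.single_apply, det_fin_four]
    ring
  have hx6 : chi u v w 6 = -u 0*v 1*w 3 + u 0*v 2*w 4 + u 0*v 3*w 1 - u 0*v 4*w 2 + u 1*v 0*w 3 + u 1*v 2*w 5 - u 1*v 3*w 0 - u 1*v 5*w 2 - u 2*v 0*w 4 - u 2*v 1*w 5 + u 2*v 4*w 0 + u 2*v 5*w 1 - u 3*v 0*w 1 + u 3*v 1*w 0 + u 3*v 4*w 5 - u 3*v 5*w 4 + u 4*v 0*w 2 - u 4*v 2*w 0 - u 4*v 3*w 5 + u 4*v 5*w 3 + u 5*v 1*w 2 - u 5*v 2*w 1 + u 5*v 3*w 4 - u 5*v 4*w 3 := by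
    show starphi0 u v w (e 6) = _
    simp [starphi0, quad, e, EuclideanSpace.single_apply, det_fin_four]
    ring
  intro i j
  fin_cases i <;> fin_cases j <;>
    · simp only [Fin.reduceFinMk, Fin.zero_eta, Fin.mk_one, Matrix.cons_val', Matrix.cons_val_zero,
        Matrix.cons_val_one, Matrix.head_cons, Matrix.cons_val_two, Matrix.tail_cons,
        Matrix.cons_val_three, Matrix.cons_val_fin_one, Matrix.head_fin_const,
        PiLp.inner_apply, RCLike.inner_apply, conj_trivial, Fin.sum_univ_seven,
        crossA0, crossA1, crossA2, crossA3, crossA4, crossA5, crossA6, hx0, hx1, hx2, hx3, hx4, hx5, hx6]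
      first
      | ring1
      | linear_combination hp
      | linear_combination -hp
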